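/- Let S be an incomplete matrix (entries in ℝ ∪ {⊛}) satisfying the sqrt condition. If a completion C of S satisfies PSD rank(C) ≤ 3, then there exists a real matrix Q with Q∘Q = C and rank(Q) ≤ 3. -/

import Mathlib

open Matrix

noncomputable def PsdRank {α β : Type} [Fintype α] [Fintype β] (A : Matrix α β ℝ) : ℕ :=
  sInf {k : ℕ | ∃ (B : α → Matrix (Fin k) (Fin k) ℝ) (C : β → Matrix (Fin k) (Fin k) ℝ),
    (∀ i, (B i).PosSemidef) ∧ (∀ j, (C j).PosSemidef) ∧ ∀ i j, A i j = ((B i) * (C j)).trace}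

/-- An incomplete matrix has entries in `Option ℝ`, with `none` denoting an
unspecified entry `⊛`. The sqrt condition for the matrix (one direction). -/
def SqrtCondOneSide {m n : ℕ} (S : Matrix (Fin m) (Fin n) (Option ℝ)) : Prop :=
  ∀ k : Fin n, ∃ (i₁ i₂ : Fin m) (j₁ j₂ : Fin n),
    S i₁ k = some 0 ∧ S i₁ j₁ = some 1 ∧ S i₁ j₂ = some 0 ∧
    S i₂ k = some 0 ∧ S i₂ j₁ = some 0 ∧ S i₂ j₂ = some 1

def SqrtCond {m n : ℕ} (S : Matrix (Fin m) (Fin n) (Option ℝ)) : Prop :=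
  SqrtCondOneSide S ∧ SqrtCondOneSide S.transpose

def IsCompletion {m n : ℕ} (S : Matrix (Fin m) (Fin n) (Option ℝ))
    (C : Matrix (Fin m) (Fin n) ℝ) : Prop :=
  ∀ i j a, S i j = some a → C i j = a

section SqrtRankAux

open Module

private lemma myTraceZero {k : ℕ} {A : Matrix (Fin k) (Fin k) ℝ}
    (h : (Aᴴ * A).trace = 0) : A = 0 := by
  have h' : ∑ j, ∑ i, A i j * A i j = 0 := by
    simpa [Matrix.trace, Matrix.diag, Matrix.mul_apply, Matrix.conjTranspose_apply] using h
  ext i j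
  have hnn : ∀ j ∈ Finset.univ, (0:ℝ) ≤ ∑ i, A i j * A i j :=
    fun j _ => Finset.sum_nonneg fun i _ => mul_self_nonneg _
  have h2 := (Finset.sum_eq_zero_iff_of_nonneg hnn).mp h' j (Finset.mem_univ j)
  have h3 := (Finset.sum_eq_zero_iff_of_nonneg
    (fun i _ => mul_self_nonneg (A i j))).mp h2 i (Finset.mem_univ i)
  simpa [mul_self_eq_zero] using h3

private lemma psd_mul_eq_zero {k : ℕ} {B C : Matrix (Fin k) (Fin k) ℝ}
    (hB : B.PosSemidef) (hC : C.PosSemidef) (h : (B * C).trace = 0) : B * C = 0 := by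
  obtain ⟨A, rfl⟩ : ∃ A : Matrix (Fin k) (Fin k) ℝ, B = Aᴴ * A := by
    open scoped MatrixOrder in
    obtain ⟨A, hA⟩ := CStarAlgebra.nonneg_iff_eq_star_mul_self.mp hB.nonneg; exact ⟨A, hA⟩
  obtain ⟨D, rfl⟩ : ∃ D : Matrix (Fin k) (Fin k) ℝ, C = Dᴴ * D := by
    open scoped MatrixOrder in
    obtain ⟨D, hD⟩ := CStarAlgebra.nonneg_iff_eq_star_mul_self.mp hC.nonneg; exact ⟨D, hD⟩
  have e1 : (A * Dᴴ)ᴴ * (A * Dᴴ) = D * (Aᴴ * (A * Dᴴ)) := by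
    rw [conjTranspose_mul, conjTranspose_conjTranspose, Matrix.mul_assoc]
  have e2 : (Aᴴ * (A * Dᴴ)) * D = Aᴴ * A * (Dᴴ * D) := by
    simp [Matrix.mul_assoc]
  have key : A * Dᴴ = 0 := by
    apply myTraceZero
    rw [e1, trace_mul_comm, e2, h]
  calc Aᴴ * A * (Dᴴ * D) = Aᴴ * (A * Dᴴ) * D := by simp [Matrix.mul_assoc]
    _ = 0 := by rw [key, Matrix.mul_zero, Matrix.zero_mul]

private lemma core_rank_le_one {k : ℕ} (hk : k ≤ 3)
    {B₁ B₂ C₀ C₁ C₂ : Matrix (Fin k) (Fin k) ℝ}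
    (hB₁ : B₁.PosSemidef) (hB₂ : B₂.PosSemidef)
    (hC₀ : C₀.PosSemidef) (hC₂ : C₂.PosSemidef)
    (h10 : (B₁ * C₀).trace = 0) (h20 : (B₂ * C₀).trace = 0)
    (h12 : (B₁ * C₂).trace = 0)
    (h11 : (B₁ * C₁).trace = 1) (h22 : (B₂ * C₂).trace = 1) :
    C₀.rank ≤ 1 := by
  have z10 : B₁ * C₀ = 0 := psd_mul_eq_zero hB₁ hC₀ h10
  have z20 : B₂ * C₀ = 0 := psd_mul_eq_zero hB₂ hC₀ h20
  have z12 : B₁ * C₂ = 0 := psd_mul_eq_zero hB₁ hC₂ h12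
  set K₁ := LinearMap.ker B₁.mulVecLin with hK₁
  set K₂ := LinearMap.ker B₂.mulVecLin with hK₂
  have hrange : LinearMap.range C₀.mulVecLin ≤ K₁ ⊓ K₂ := by
    rintro x ⟨y, rfl⟩
    constructor
    · show B₁.mulVecLin (C₀.mulVecLin y) = 0
      simp only [mulVecLin_apply, mulVec_mulVec, z10, zero_mulVec]
    · show B₂.mulVecLin (C₀.mulVecLin y) = 0
      simp only [mulVecLin_apply, mulVec_mulVec, z20, zero_mulVec]
  have hBC2 : B₂ * C₂ ≠ 0 := by
    intro h; rw [h] at h22; simp at h22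
  obtain ⟨a, b, hab⟩ : ∃ a b, (B₂ * C₂) a b ≠ 0 := by
    by_contra hcon; push_neg at hcon
    exact hBC2 (by ext a b; simpa using hcon a b)
  set v : Fin k → ℝ := C₂ *ᵥ Pi.single b 1 with hv
  have hv1 : v ∈ K₁ := by
    show B₁.mulVecLin v = 0
    simp only [hv, mulVecLin_apply, mulVec_mulVec, z12, zero_mulVec]
  have hv2 : v ∉ K₂ := by
    intro hmem
    have : B₂ *ᵥ v = 0 := hmem
    rw [hv, mulVec_mulVec] at this
    have := congr_fun this a
    rw [mulVec_single] at this
    simp at this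
    exact hab this
  have hfin : finrank ℝ ↥(K₁ ⊓ K₂) ≤ 1 := by
    by_contra hcon
    push_neg at hcon
    have hlt : K₁ ⊓ K₂ < K₁ := by
      refine lt_of_le_of_ne inf_le_left (fun h => hv2 ?_)
      rw [← h] at hv1
      exact hv1.2
    have h3' : 3 ≤ finrank ℝ ↥K₁ := by
      have := Submodule.finrank_lt_finrank_of_lt hlt; omega
    have h4 : finrank ℝ ↥K₁ ≤ k := by
      have := Submodule.finrank_le K₁
      simpa [Module.finrank_fin_fun] using this
    have hKtop : K₁ = ⊤ := by
      apply Submodule.eq_top_of_finrank_eq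
      simp only [Module.finrank_fin_fun]
      omega
    have hB₁0 : B₁ = 0 := by
      ext p q
      have hmem : (Pi.single q 1 : Fin k → ℝ) ∈ K₁ := hKtop ▸ Submodule.mem_top
      have : B₁ *ᵥ Pi.single q 1 = 0 := hmem
      have := congr_fun this p
      simpa using this
    rw [hB₁0] at h11
    simp at h11
  calc C₀.rank = finrank ℝ (LinearMap.range C₀.mulVecLin) := rfl
    _ ≤ finrank ℝ ↥(K₁ ⊓ K₂) := Submodule.finrank_mono hrange
    _ ≤ 1 := hfin

private lemma psd_rank_le_one_outer {k : ℕ} {M : Matrix (Fin k) (Fin k) ℝ}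
    (hM : M.PosSemidef) (hr : M.rank ≤ 1) :
    ∃ u : Fin k → ℝ, ∀ a b, M a b = u a * u b := by
  by_cases h0 : M = 0
  · exact ⟨0, fun a b => by simp [h0]⟩
  have hdiag : ∃ i, M i i ≠ 0 := by
    by_contra hcon
    push_neg at hcon
    apply h0
    ext p q
    have hcol : M *ᵥ Pi.single q 1 = 0 := by
      rw [← (hM.dotProduct_mulVec_zero_iff (Pi.single q 1))]
      simp only [dotProduct]
      rw [Finset.sum_eq_single q]
      · simp [hcon q]
      · intro t _ ht; simp [Pi.single_eq_of_ne ht]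
      · simp
    have := congr_fun hcol p
    simpa using this
  obtain ⟨i, hi⟩ := hdiag
  have hipos : 0 < M i i := lt_of_le_of_ne hM.diag_nonneg (Ne.symm hi)
  set ci : Fin k → ℝ := Mᵀ i with hci
  have hci_mem : ci ∈ LinearMap.range M.mulVecLin :=
    ⟨Pi.single i 1, by rw [mulVecLin_apply, mulVec_single_one]; rfl⟩
  have hci_ne : ci ≠ 0 := fun h => hi (by simpa [hci] using congr_fun h i)
  have hspan : Submodule.span ℝ {ci} = LinearMap.range M.mulVecLin := by
    apply Submodule.eq_of_le_of_finrank_le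
    · rw [Submodule.span_le, Set.singleton_subset_iff]; exact hci_mem
    · calc finrank ℝ (LinearMap.range M.mulVecLin) = M.rank := rfl
        _ ≤ 1 := hr
        _ = finrank ℝ (Submodule.span ℝ {ci}) := (finrank_span_singleton hci_ne).symm
  have hcols : ∀ j, ∃ c : ℝ, Mᵀ j = c • ci := by
    intro j
    have hmem : Mᵀ j ∈ Submodule.span ℝ {ci} := by
      rw [hspan]; exact ⟨Pi.single j 1, by rw [mulVecLin_apply, mulVec_single_one]; rfl⟩
    obtain ⟨c, hc⟩ := Submodule.mem_span_singleton.mp hmem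
    exact ⟨c, hc.symm⟩
  have hsymm : ∀ p q, M p q = M q p := by
    intro p q
    have := congr_fun (congr_fun hM.1 p) q
    simpa [conjTranspose_apply] using this.symm
  have hentry : ∀ a b, M a b = M a i * M b i / M i i := by
    intro a b
    obtain ⟨c, hc⟩ := hcols b
    have h1 : M a b = c * M a i := by
      have := congr_fun hc a; simpa [hci, transpose_apply] using this
    have h2 : M i b = c * M i i := by
      have := congr_fun hc i; simpa [hci, transpose_apply] using this
    have hc' : c = M b i / M i i := by
      field_simp at h2 ⊢
      rw [hsymm i b] at h2
      linarith
    rw [h1, hc']; ring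
  refine ⟨fun a => M a i / Real.sqrt (M i i), fun a b => ?_⟩
  rw [hentry a b, div_mul_div_comm, Real.mul_self_sqrt hipos.le]

private lemma trace_outer_outer {k : ℕ} (w u : Fin k → ℝ)
    {B C : Matrix (Fin k) (Fin k) ℝ}
    (hB : ∀ a b, B a b = w a * w b) (hC : ∀ a b, C a b = u a * u b) :
    (B * C).trace = (∑ t, w t * u t) * (∑ t, w t * u t) := by
  simp only [Matrix.trace, Matrix.diag, Matrix.mul_apply, hB, hC]
  rw [Finset.sum_mul_sum]
  exact Finset.sum_congr rfl fun a _ => Finset.sum_congr rfl fun b _ => by ring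

private lemma psd_set_nonempty {m n : ℕ} (C : Matrix (Fin m) (Fin n) ℝ)
    (hCnonneg : ∀ i j, 0 ≤ C i j) :
    {k : ℕ | ∃ (B : Fin m → Matrix (Fin k) (Fin k) ℝ)
      (Cf : Fin n → Matrix (Fin k) (Fin k) ℝ),
      (∀ i, (B i).PosSemidef) ∧ (∀ j, (Cf j).PosSemidef) ∧
      ∀ i j, C i j = ((B i) * (Cf j)).trace}.Nonempty := by
  refine ⟨m, fun i => diagonal (Pi.single i 1), fun j => diagonal (fun t => C t j),
    fun i => Matrix.PosSemidef.diagonal ?_, fun j => Matrix.PosSemidef.diagonal ?_, ?_⟩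
  · intro t
    by_cases h : t = i
    · subst h; simp
    · simp [Pi.single_eq_of_ne h]
  · intro t; exact hCnonneg t j
  · intro i j
    rw [diagonal_mul_diagonal, trace_diagonal]
    rw [Finset.sum_eq_single i]
    · simp
    · intro t _ ht; simp [Pi.single_eq_of_ne ht]
    · simp

end SqrtRankAux

theorem sqrt_rank_from_psd_rank_three {m n : ℕ}
    (S : Matrix (Fin m) (Fin n) (Option ℝ)) (hS : SqrtCond S)
    (C : Matrix (Fin m) (Fin n) ℝ) (hC : IsCompletion S C)
    (hCnonneg : ∀ i j, 0 ≤ C i j) (hpsd : PsdRank C ≤ 3) :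
    ∃ Q : Matrix (Fin m) (Fin n) ℝ, (∀ i j, Q i j * Q i j = C i j) ∧ Q.rank ≤ 3 := by
  classical
  have hne := psd_set_nonempty C hCnonneg
  have hmem := Nat.sInf_mem hne
  set k := sInf {k : ℕ | ∃ (B : Fin m → Matrix (Fin k) (Fin k) ℝ)
      (Cf : Fin n → Matrix (Fin k) (Fin k) ℝ),
      (∀ i, (B i).PosSemidef) ∧ (∀ j, (Cf j).PosSemidef) ∧
      ∀ i j, C i j = ((B i) * (Cf j)).trace} with hkdef
  obtain ⟨B, Cf, hBpsd, hCfpsd, hfac⟩ := hmem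
  have hk3 : k ≤ 3 := hpsd
  -- every column factor has rank ≤ 1
  have hu : ∀ j : Fin n, ∃ u : Fin k → ℝ, ∀ a b, Cf j a b = u a * u b := by
    intro j
    obtain ⟨i₁, i₂, j₁, j₂, p1, p2, p3, p4, p5, p6⟩ := hS.1 j
    apply psd_rank_le_one_outer (hCfpsd j)
    refine core_rank_le_one hk3 (hBpsd i₁) (hBpsd i₂) (hCfpsd j) (hCfpsd j₂)
      (C₁ := Cf j₁) ?_ ?_ ?_ ?_ ?_
    · rw [← hfac i₁ j]; exact hC i₁ j 0 p1
    · rw [← hfac i₂ j]; exact hC i₂ j 0 p4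
    · rw [← hfac i₁ j₂]; exact hC i₁ j₂ 0 p3
    · rw [← hfac i₁ j₁]; exact hC i₁ j₁ 1 p2
    · rw [← hfac i₂ j₂]; exact hC i₂ j₂ 1 p6
  -- every row factor has rank ≤ 1
  have hw : ∀ r : Fin m, ∃ w : Fin k → ℝ, ∀ a b, B r a b = w a * w b := by
    intro r
    obtain ⟨i₁, i₂, j₁, j₂, p1, p2, p3, p4, p5, p6⟩ := hS.2 r
    apply psd_rank_le_one_outer (hBpsd r)
    refine core_rank_le_one hk3 (hCfpsd i₁) (hCfpsd i₂) (hBpsd r) (hBpsd j₂)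
      (C₁ := B j₁) ?_ ?_ ?_ ?_ ?_
    · rw [trace_mul_comm, ← hfac r i₁]; exact hC r i₁ 0 p1
    · rw [trace_mul_comm, ← hfac r i₂]; exact hC r i₂ 0 p4
    · rw [trace_mul_comm, ← hfac j₂ i₁]; exact hC j₂ i₁ 0 p3
    · rw [trace_mul_comm, ← hfac j₁ i₁]; exact hC j₁ i₁ 1 p2
    · rw [trace_mul_comm, ← hfac j₂ i₂]; exact hC j₂ i₂ 1 p6
  choose u hu using hu
  choose w hw using hw
  set W : Matrix (Fin m) (Fin k) ℝ := Matrix.of w with hW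
  set U : Matrix (Fin n) (Fin k) ℝ := Matrix.of u with hU
  refine ⟨W * Uᵀ, ?_, ?_⟩
  · intro i j
    have hQ : (W * Uᵀ) i j = ∑ t, w i t * u j t := by
      simp [Matrix.mul_apply, hW, hU]
    rw [hQ, ← trace_outer_outer (w i) (u j) (hw i) (hu j), hfac i j]
  · calc (W * Uᵀ).rank ≤ W.rank := Matrix.rank_mul_le_left W Uᵀ
      _ ≤ Fintype.card (Fin k) := Matrix.rank_le_card_width W
      _ = k := Fintype.card_fin k
      _ ≤ 3 := hk3
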